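/- Let A ∈ ℤ^{m×n} with 1 ≤ m < n satisfy the regularity assumptions and write A = (A_1, A_2) with A_1 ∈ ℤ^{m×m} and det A_1 ≠ 0. Let v̄ = A_1·1̄ be the sum of the first m columns of A, let 1̂ ∈ ℤ^n be the vector whose first m coordinates are 1 and whose last n−m coordinates are 0, and let L_A^⊥ = {z ∈ ℤ^n : A z = 0}. Then for every integer s ≥ 1, ⌈g_s(A, v̄)⌉ ≥ μ_s(P(A, v̄) − 1̂, L_A^⊥) − 1 − c(A_1, A). -/

import Mathlib

open scoped BigOperators
open Matrix

noncomputable section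

/-- The real matrix obtained from an integer matrix. -/
def Rmat {m n : ℕ} (A : Matrix (Fin m) (Fin n) ℤ) : Matrix (Fin m) (Fin n) ℝ :=
  A.map (Int.cast : ℤ → ℝ)

/-- The real vector obtained from an integer vector. -/
def Rvec {m : ℕ} (b : Fin m → ℤ) : Fin m → ℝ := fun i => (b i : ℝ)

/-- The knapsack polytope P(A,b) = {x ≥ 0 : A x = b}. -/
def knap {m n : ℕ} (A : Matrix (Fin m) (Fin n) ℤ) (b : Fin m → ℝ) : Set (Fin n → ℝ) :=
  {x | (∀ i, 0 ≤ x i) ∧ (Rmat A).mulVec x = b}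

/-- The set F_s(A) of integer vectors b for which P(A,b) contains at least s integer points. -/
def feas {m n : ℕ} (s : ℕ) (A : Matrix (Fin m) (Fin n) ℤ) : Set (Fin m → ℤ) :=
  {b | s ≤ Set.ncard {x : Fin n → ℤ | (∀ i, 0 ≤ x i) ∧ A.mulVec x = b}}

/-- The cone generated by the columns of A. -/
def coneOf {m n : ℕ} (A : Matrix (Fin m) (Fin n) ℤ) : Set (Fin m → ℝ) :=
  {y | ∃ x : Fin n → ℝ, (∀ i, 0 ≤ x i) ∧ (Rmat A).mulVec x = y}

/-- The generalized diagonal s-Frobenius number g_s(A, w). -/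
def gDiag {m n : ℕ} (s : ℕ) (A : Matrix (Fin m) (Fin n) ℤ) (w : Fin m → ℝ) : ℝ :=
  sInf {t : ℝ | 0 ≤ t ∧
    ∀ b : Fin m → ℤ, Rvec b ∈ interior ((fun c => t • w + c) '' coneOf A) → b ∈ feas s A}

/-- v = A·1 is the sum of the columns of A (as a real vector). -/
def vA {m n : ℕ} (A : Matrix (Fin m) (Fin n) ℤ) : Fin m → ℝ :=
  (Rmat A).mulVec (fun _ => 1)

/-- The diagonal s-Frobenius number g_s(A) = g_s(A, A·1). -/
def gFrob {m n : ℕ} (s : ℕ) (A : Matrix (Fin m) (Fin n) ℤ) : ℝ := gDiag s A (vA A)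

/-- The regularity assumptions: the m×m minors of A have gcd 1, and the only
nonnegative real solution of A x = 0 is x = 0. -/
def regular {m n : ℕ} (A : Matrix (Fin m) (Fin n) ℤ) : Prop :=
  Finset.univ.gcd (fun I : Fin m ↪ Fin n => (A.submatrix id ⇑I).det) = 1 ∧
  ∀ x : Fin n → ℝ, (∀ i, 0 ≤ x i) → (Rmat A).mulVec x = 0 → x = 0

/-- The s-covering radius of K with respect to L: the smallest μ > 0 such that every
point of the real span of L lies in y + μK for at least s distinct y ∈ L. -/
def muCov {N : ℕ} (s : ℕ) (K L : Set (Fin N → ℝ)) : ℝ :=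
  sInf {μ : ℝ | 0 < μ ∧ ∀ x ∈ Submodule.span ℝ L,
    ∃ T : Finset (Fin N → ℝ), ↑T ⊆ L ∧ s ≤ T.card ∧ ∀ y ∈ T, ∃ k ∈ K, x = y + μ • k}

/-- The set of absolute values of m×m minors of A. -/
def minorAbs {m n : ℕ} (A : Matrix (Fin m) (Fin n) ℤ) : Set ℤ :=
  {d | ∃ I : Fin m ↪ Fin n, d = |(A.submatrix id ⇑I).det|}

/-- m(A): the minimal absolute m×m minor of A. -/
def mMin {m n : ℕ} (A : Matrix (Fin m) (Fin n) ℤ) : ℤ := sInf (minorAbs A)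

/-- M(A): the maximal absolute m×m minor of A. -/
def mMax {m n : ℕ} (A : Matrix (Fin m) (Fin n) ℤ) : ℤ := sSup (minorAbs A)

/-- The lattice L_A^⊥ = {z ∈ ℤ^n : A z = 0}, viewed as a subset of ℝ^n. -/
def kerLat {m n : ℕ} (A : Matrix (Fin m) (Fin n) ℤ) : Set (Fin n → ℝ) :=
  {x | ∃ z : Fin n → ℤ, A.mulVec z = 0 ∧ x = Rvec z}

/-- √(det (A Aᵀ)). -/
def sqrtDet {m n : ℕ} (A : Matrix (Fin m) (Fin n) ℤ) : ℝ :=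
  Real.sqrt (((A * Aᵀ).det : ℤ) : ℝ)

/-- The s-Frobenius number of a positive primitive integer vector. -/
def sFrob {n : ℕ} (s : ℕ) (a : Fin n → ℤ) : ℤ :=
  sSup {b : ℤ | Set.ncard {x : Fin n → ℤ | (∀ i, 0 ≤ x i) ∧ ∑ i, a i * x i = b} < s}

/-- The full-rank lattice in ℝ^d with basis the columns of an invertible matrix B. -/
def latSet {d : ℕ} (B : Matrix (Fin d) (Fin d) ℝ) : Set (Fin d → ℝ) :=
  {x | ∃ z : Fin d → ℤ, x = B.mulVec (fun i => (z i : ℝ))}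

/-- The absolute s-inhomogeneous minimum ϑ_s(K) = inf_L μ_s(K,L)/det(L)^{1/d}. -/
def theta (s d : ℕ) (K : Set (Fin d → ℝ)) : ℝ :=
  sInf {r : ℝ | ∃ B : Matrix (Fin d) (Fin d) ℝ, B.det ≠ 0 ∧
    r = muCov s K (latSet B) / |B.det| ^ ((1 : ℝ) / d)}

/-- The standard simplex S_d ⊂ ℝ^d. -/
def stdSimplex' (d : ℕ) : Set (Fin d → ℝ) :=
  {x | (∀ i, 0 ≤ x i) ∧ ∑ i, x i ≤ 1}


-- ===================== auxiliary lemmas =====================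

lemma rmat_mulVec_cast' {m n : ℕ} (A : Matrix (Fin m) (Fin n) ℤ) (z : Fin n → ℤ) :
    (Rmat A).mulVec (Rvec z) = Rvec (A.mulVec z) := by
  funext i; simp [Rmat, Rvec, Matrix.mulVec, dotProduct]

lemma mulVec_splitR {m k : ℕ} (A : Matrix (Fin m) (Fin (m + k)) ℤ)
    (A1 : Matrix (Fin m) (Fin m) ℤ) (hA1 : A1 = Matrix.of fun i j => A i (Fin.castAdd k j))
    (A2 : Matrix (Fin m) (Fin k) ℤ) (hA2 : A2 = Matrix.of fun i j => A i (Fin.natAdd m j))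
    (x : Fin (m + k) → ℝ) :
    (Rmat A).mulVec x = (Rmat A1).mulVec (fun i => x (Fin.castAdd k i))
      + (Rmat A2).mulVec (fun j => x (Fin.natAdd m j)) := by
  subst hA1 hA2; funext i
  simp [Rmat, Matrix.mulVec, dotProduct, Fin.sum_univ_add]

lemma mulVec_splitZ {m k : ℕ} (A : Matrix (Fin m) (Fin (m + k)) ℤ)
    (A1 : Matrix (Fin m) (Fin m) ℤ) (hA1 : A1 = Matrix.of fun i j => A i (Fin.castAdd k j))
    (A2 : Matrix (Fin m) (Fin k) ℤ) (hA2 : A2 = Matrix.of fun i j => A i (Fin.natAdd m j))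
    (x : Fin (m + k) → ℤ) :
    A.mulVec x = A1.mulVec (fun i => x (Fin.castAdd k i))
      + A2.mulVec (fun j => x (Fin.natAdd m j)) := by
  subst hA1 hA2; funext i
  simp [Matrix.mulVec, dotProduct, Fin.sum_univ_add]

lemma smul_mem_range' {m n : ℕ} (A : Matrix (Fin m) (Fin n) ℤ) (b : Fin m → ℤ)
    (I : Fin m ↪ Fin n) :
    ((A.submatrix id ⇑I).det) • b ∈ LinearMap.range A.mulVecLin := by
  classical
  set M := A.submatrix id ⇑I with hM
  set v := M.adjugate.mulVec b with hv
  refine ⟨fun j => ∑ i : Fin m, if I i = j then v i else 0, ?_⟩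
  funext i0
  have h1 : A.mulVecLin (fun j => ∑ i : Fin m, if I i = j then v i else 0) i0
      = ∑ i : Fin m, A i0 (I i) * v i := by
    simp only [Matrix.mulVecLin_apply, Matrix.mulVec, dotProduct, Finset.mul_sum,
      mul_ite, mul_zero]
    rw [Finset.sum_comm]
    refine Finset.sum_congr rfl fun i _ => ?_
    simp [hv, hM, Matrix.mulVec, dotProduct, Matrix.submatrix]
  rw [h1]
  have h2 : ∑ i : Fin m, A i0 (I i) * v i = (M * M.adjugate).mulVec b i0 := by
    rw [← Matrix.mulVec_mulVec]
    simp [hv, hM, Matrix.mulVec, dotProduct, Matrix.submatrix]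
  rw [h2, Matrix.mul_adjugate]
  simp [Matrix.smul_mulVec]

lemma int_surj {m n : ℕ} (A : Matrix (Fin m) (Fin n) ℤ)
    (hgcd : Finset.univ.gcd (fun I : Fin m ↪ Fin n => (A.submatrix id ⇑I).det) = 1)
    (b : Fin m → ℤ) : ∃ u : Fin n → ℤ, A.mulVec u = b := by
  classical
  have key : ∀ s : Finset (Fin m ↪ Fin n),
      (s.gcd (fun I => (A.submatrix id ⇑I).det)) • b ∈ LinearMap.range A.mulVecLin := by
    intro s
    induction s using Finset.induction_on with
    | empty => simp
    | @insert a s ha ih =>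
      rw [Finset.gcd_insert]
      set x := (A.submatrix id ⇑a).det
      set y := s.gcd (fun I => (A.submatrix id ⇑I).det)
      have hx : x • b ∈ LinearMap.range A.mulVecLin := smul_mem_range' A b a
      have hbez : (gcd x y : ℤ) = x * Int.gcdA x y + y * Int.gcdB x y := by
        rw [← Int.coe_gcd, Int.gcd_eq_gcd_ab x y]
      rw [hbez, add_smul, mul_comm x, mul_comm y, mul_smul, mul_smul]
      exact Submodule.add_mem _ (Submodule.smul_mem _ _ hx) (Submodule.smul_mem _ _ ih)
  have h := key Finset.univ
  rw [hgcd, one_smul] at h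
  obtain ⟨u, hu⟩ := h
  exact ⟨u, hu⟩

lemma mulVec_eq_sum_cols {m n : ℕ} (M : Matrix (Fin m) (Fin n) ℝ) (x : Fin n → ℝ) :
    M.mulVec x = ∑ j : Fin n, x j • M.mulVec (Pi.single j 1) := by
  funext i
  simp [Matrix.mulVec, dotProduct, Matrix.mulVec_single, Finset.sum_apply, mul_comm]

lemma pos_functional {m n : ℕ} (A : Matrix (Fin m) (Fin n) ℤ)
    (hreg : ∀ x : Fin n → ℝ, (∀ i, 0 ≤ x i) → (Rmat A).mulVec x = 0 → x = 0) :
    ∃ f : (Fin m → ℝ) →L[ℝ] ℝ, ∃ v : ℝ, 0 < v ∧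
      ∀ j : Fin n, v < f ((Rmat A).mulVec (Pi.single j 1)) := by
  classical
  set T := (Rmat A).mulVecLin with hT
  set K : Set (Fin m → ℝ) := T '' (stdSimplex ℝ (Fin n)) with hK
  have hKconv : Convex ℝ K := (convex_stdSimplex ℝ (Fin n)).linear_image T
  have hKcomp : IsCompact K :=
    (isCompact_stdSimplex ℝ (Fin n)).image T.continuous_of_finiteDimensional
  have h0 : (0 : Fin m → ℝ) ∉ K := by
    rintro ⟨x, ⟨hx0, hx1⟩, hx⟩
    have hx' := hreg x hx0 hx
    rw [hx'] at hx1
    simp at hx1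
  obtain ⟨f, u, hu, hfK⟩ :=
    geometric_hahn_banach_point_closed hKconv hKcomp.isClosed h0
  have hu0 : 0 < u := by simpa using hu
  refine ⟨f, u, hu0, fun j => ?_⟩
  apply hfK
  exact ⟨Pi.single j 1, single_mem_stdSimplex ℝ j, rfl⟩

lemma sol_finite {m n : ℕ} (A : Matrix (Fin m) (Fin n) ℤ)
    (hreg : ∀ x : Fin n → ℝ, (∀ i, 0 ≤ x i) → (Rmat A).mulVec x = 0 → x = 0)
    (b : Fin m → ℤ) :
    ({x : Fin n → ℤ | (∀ i, 0 ≤ x i) ∧ A.mulVec x = b}).Finite := by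
  classical
  obtain ⟨f, v, hv, hf⟩ := pos_functional A hreg
  have hbound : ∀ x ∈ {x : Fin n → ℤ | (∀ i, 0 ≤ x i) ∧ A.mulVec x = b},
      ∀ j, x j ≤ ⌈f (Rvec b) / v⌉ := by
    rintro x ⟨hx0, hxb⟩ j
    have hcast : (Rmat A).mulVec (Rvec x) = Rvec b := by
      rw [← hxb]; funext i; simp [Rmat, Rvec, Matrix.mulVec, dotProduct]
    have hsum : f (Rvec b) = ∑ j' : Fin n, (x j' : ℝ) * f ((Rmat A).mulVec (Pi.single j' 1)) := by
      rw [← hcast, mulVec_eq_sum_cols, map_sum]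
      simp [Rvec, smul_eq_mul]
    have hterm : (x j : ℝ) * v ≤ f (Rvec b) := by
      rw [hsum]
      have h1 : (x j : ℝ) * v ≤ (x j : ℝ) * f ((Rmat A).mulVec (Pi.single j 1)) := by
        have h := hf j
        have hxj : (0:ℝ) ≤ (x j : ℝ) := by exact_mod_cast hx0 j
        nlinarith
      refine le_trans h1 (Finset.single_le_sum
        (f := fun j' => (x j' : ℝ) * f ((Rmat A).mulVec (Pi.single j' 1)))
        (fun j' _ => ?_) (Finset.mem_univ j))
      have hxj : (0:ℝ) ≤ (x j' : ℝ) := by exact_mod_cast hx0 j'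
      exact mul_nonneg hxj (le_of_lt (lt_trans hv (hf j')))
    have hd : (x j : ℝ) ≤ f (Rvec b) / v := (le_div_iff₀ hv).mpr hterm
    exact_mod_cast le_trans hd (Int.le_ceil _)
  apply Set.Finite.subset (Set.finite_Icc (0 : Fin n → ℤ) (fun _ => ⌈f (Rvec b) / v⌉))
  rintro x hx
  rcases hx with ⟨hx0, hxb⟩
  exact ⟨hx0, fun j => hbound x ⟨hx0, hxb⟩ j⟩

lemma span_ker_subset {m n : ℕ} (A : Matrix (Fin m) (Fin n) ℤ) (x : Fin n → ℝ)
    (hx : x ∈ Submodule.span ℝ (kerLat A)) : (Rmat A).mulVec x = 0 := by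
  have hsub : kerLat A ⊆ (LinearMap.ker (Rmat A).mulVecLin : Set (Fin n → ℝ)) := by
    rintro y ⟨z, hz, rfl⟩
    simp only [SetLike.mem_coe, LinearMap.mem_ker, Matrix.mulVecLin_apply]
    rw [rmat_mulVec_cast', hz]
    funext i; simp [Rvec]
  have h := Submodule.span_le.mpr hsub hx
  simpa using h

lemma mem_interior_translate {E : Type*} [AddCommGroup E] [TopologicalSpace E]
    [IsTopologicalAddGroup E] (w : E) (C : Set E) (x : E) :
    x ∈ interior ((fun c => w + c) '' C) ↔ x - w ∈ interior C := by
  have h : (fun c => w + c) '' C = (Homeomorph.addLeft w) '' C := rfl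
  rw [h, ← Homeomorph.image_interior]
  constructor
  · rintro ⟨y, hy, rfl⟩
    simpa [add_sub_cancel_left] using hy
  · intro hy
    exact ⟨x - w, hy, by simp⟩

lemma pos_mem_interior {m k : ℕ} (A : Matrix (Fin m) (Fin (m + k)) ℤ)
    (A1 : Matrix (Fin m) (Fin m) ℤ) (hA1 : A1 = Matrix.of fun i j => A i (Fin.castAdd k j))
    (hdet : A1.det ≠ 0) (q : Fin m → ℝ) (hq : ∀ i, 0 < q i) :
    (Rmat A1).mulVec q ∈ interior (coneOf A) := by
  classical
  have hdetR : (Rmat A1).det ≠ 0 := by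
    have hcd : (Rmat A1).det = ((A1.det : ℝ)) := by
      simpa [Rmat, RingHom.mapMatrix_apply] using (RingHom.map_det (Int.castRingHom ℝ) A1).symm
    rw [hcd]; exact_mod_cast hdet
  have hunit : IsUnit (Rmat A1).det := isUnit_iff_ne_zero.mpr hdetR
  set U : Set (Fin m → ℝ) := {y | ∀ i, 0 < ((Rmat A1)⁻¹.mulVec y) i} with hU
  have hopen : IsOpen U := by
    have hUeq : U = ⋂ i : Fin m, (fun y => ((Rmat A1)⁻¹.mulVec y) i) ⁻¹' Set.Ioi 0 := by
      ext y; simp [hU]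
    rw [hUeq]
    refine isOpen_iInter_of_finite fun i => ?_
    refine IsOpen.preimage ?_ isOpen_Ioi
    have hcont : (fun y : Fin m → ℝ => ((Rmat A1)⁻¹.mulVec y) i)
        = fun y => ∑ j : Fin m, (Rmat A1)⁻¹ i j * y j := by
      funext y; simp [Matrix.mulVec, dotProduct]
    rw [hcont]
    exact continuous_finset_sum _ fun j _ => continuous_const.mul (continuous_apply j)
  have hsubC : U ⊆ coneOf A := by
    intro y hy
    set p : Fin m → ℝ := (Rmat A1)⁻¹.mulVec y with hp
    refine ⟨fun jj => Fin.addCases (fun i => p i) (fun _ => 0) jj, ?_, ?_⟩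
    · intro jj
      cases jj using Fin.addCases with
      | left i => simpa using le_of_lt (hy i)
      | right j' => simp
    · have hsplit : (Rmat A).mulVec (fun jj => Fin.addCases (fun i => p i) (fun _ => 0) jj)
          = (Rmat A1).mulVec p := by
        subst hA1
        funext i
        simp [Rmat, Matrix.mulVec, dotProduct, Fin.sum_univ_add]
      rw [hsplit, hp, Matrix.mulVec_mulVec, Matrix.mul_nonsing_inv _ hunit, Matrix.one_mulVec]
  have hmemU : (Rmat A1).mulVec q ∈ U := by
    intro i
    rw [Matrix.mulVec_mulVec, Matrix.nonsing_inv_mul _ hunit, Matrix.one_mulVec]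
    exact hq i
  exact interior_maximal hsubC hopen hmemU

lemma ker_subset_span {m k : ℕ} (A : Matrix (Fin m) (Fin (m + k)) ℤ)
    (A1 : Matrix (Fin m) (Fin m) ℤ) (hA1 : A1 = Matrix.of fun i j => A i (Fin.castAdd k j))
    (A2 : Matrix (Fin m) (Fin k) ℤ) (hA2 : A2 = Matrix.of fun i j => A i (Fin.natAdd m j))
    (hdet : A1.det ≠ 0) (x : Fin (m + k) → ℝ) (hx : (Rmat A).mulVec x = 0) :
    x ∈ Submodule.span ℝ (kerLat A) := by
  classical
  set d : ℤ := A1.det with hd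
  have hdR : ((d : ℝ)) ≠ 0 := Int.cast_ne_zero.mpr hdet
  have hdetR : (Rmat A1).det ≠ 0 := by
    have hcd : (Rmat A1).det = ((A1.det : ℝ)) := by
      simpa [Rmat, RingHom.mapMatrix_apply] using (RingHom.map_det (Int.castRingHom ℝ) A1).symm
    rw [hcd]; exact_mod_cast hdet
  have hunit : IsUnit (Rmat A1).det := isUnit_iff_ne_zero.mpr hdetR
  set z1 : Fin k → (Fin m → ℤ) := fun j => fun i => -((A1.adjugate * A2) i j) with hz1
  set zvec : Fin k → (Fin (m + k) → ℤ) := fun j =>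
    fun p => Fin.addCases (fun i => z1 j i) (fun j' => if j' = j then d else 0) p with hzvec
  have hAz1 : ∀ j, A1.mulVec (z1 j) = fun i => -(d * A2 i j) := by
    intro j
    funext i
    have h1 : A1 * (A1.adjugate * A2) = d • A2 := by
      rw [← Matrix.mul_assoc, Matrix.mul_adjugate, Matrix.smul_mul, Matrix.one_mul]
    have h2 : (A1 * (A1.adjugate * A2)) i j = d * A2 i j := by rw [h1]; simp
    calc A1.mulVec (z1 j) i = -∑ l, A1 i l * (A1.adjugate * A2) l j := by
          simp [hz1, Matrix.mulVec, dotProduct, mul_neg]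
      _ = -((A1 * (A1.adjugate * A2)) i j) := by rw [Matrix.mul_apply]
      _ = -(d * A2 i j) := by rw [h2]
  have hker : ∀ j, A.mulVec (zvec j) = 0 := by
    intro j
    rw [mulVec_splitZ A A1 hA1 A2 hA2]
    funext i
    have hl : (fun i' => zvec j (Fin.castAdd k i')) = z1 j := by
      funext i'; simp [hzvec]
    have hr : A2.mulVec (fun j' => zvec j (Fin.natAdd m j')) i = A2 i j * d := by
      simp [hzvec, Matrix.mulVec, dotProduct, mul_ite, mul_zero]
    rw [Pi.add_apply, hl, hAz1 j, hr]
    simp [mul_comm]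
  set x2 : Fin k → ℝ := fun j => x (Fin.natAdd m j) with hx2
  set coeff : Fin k → ℝ := fun j => x2 j / (d : ℝ) with hcoeff
  have hxeq : x = ∑ j : Fin k, coeff j • Rvec (zvec j) := by
    have hsplit := mulVec_splitR A A1 hA1 A2 hA2 x
    rw [hx] at hsplit
    have hA1x1 : (Rmat A1).mulVec (fun i => x (Fin.castAdd k i))
        = -(Rmat A2).mulVec x2 := by
      have h := hsplit.symm
      rw [add_eq_zero_iff_eq_neg] at h
      exact h
    have hinj : ∀ u v : Fin m → ℝ, (Rmat A1).mulVec u = (Rmat A1).mulVec v → u = v := by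
      intro u v h
      have h2 := congrArg (fun w => (Rmat A1)⁻¹.mulVec w) h
      simpa [Matrix.mulVec_mulVec, Matrix.nonsing_inv_mul _ hunit, Matrix.one_mulVec] using h2
    have hleft : (fun i => x (Fin.castAdd k i))
        = fun i => ∑ j : Fin k, coeff j * ((z1 j i : ℤ) : ℝ) := by
      apply hinj
      rw [hA1x1]
      funext i0
      have lhs : (Rmat A1).mulVec (fun i => ∑ j : Fin k, coeff j * ((z1 j i : ℤ) : ℝ)) i0
          = ∑ j : Fin k, coeff j * (((A1.mulVec (z1 j)) i0 : ℤ) : ℝ) := by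
        simp only [Matrix.mulVec, dotProduct, Int.cast_sum, Int.cast_mul,
          Finset.mul_sum, Rmat, Matrix.map_apply]
        rw [Finset.sum_comm]
        exact Finset.sum_congr rfl fun j _ => Finset.sum_congr rfl fun l _ => by ring
      rw [lhs]
      simp only [hAz1]
      have rhs : (-(Rmat A2).mulVec x2) i0 = -∑ j : Fin k, ((A2 i0 j : ℤ) : ℝ) * x2 j := by
        simp [Matrix.mulVec, dotProduct, Rmat]
      rw [rhs, ← Finset.sum_neg_distrib]
      refine Finset.sum_congr rfl fun j _ => ?_
      have hterm : coeff j * ((-(d * A2 i0 j) : ℤ) : ℝ)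
          = (x2 j / (d:ℝ)) * (-((d:ℝ) * ((A2 i0 j : ℤ):ℝ))) := by
        push_cast [hcoeff]
        ring
      rw [hterm]
      field_simp
    funext p
    cases p using Fin.addCases with
    | left i =>
      have h1 := congrFun hleft i
      rw [h1]
      simp [Finset.sum_apply, hzvec, Rvec]
    | right j' =>
      have hsum : (∑ j : Fin k, coeff j • Rvec (zvec j)) (Fin.natAdd m j')
          = ∑ j : Fin k, coeff j * ((if j' = j then (d:ℝ) else 0)) := by
        simp [Finset.sum_apply, hzvec, Rvec, apply_ite (Int.cast : ℤ → ℝ)]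
      rw [hsum]
      simp only [mul_ite, mul_zero, Finset.sum_ite_eq, Finset.mem_univ, if_true]
      rw [hcoeff]
      field_simp
      rfl
  rw [hxeq]
  exact Submodule.sum_mem _ fun j _ =>
    Submodule.smul_mem _ _ (Submodule.subset_span ⟨zvec j, hker j, rfl⟩)


lemma csum_facts {m k : ℕ} (hm : 1 ≤ m) (B : Matrix (Fin m) (Fin k) ℝ) (c : ℝ)
    (hc : c = sSup {x : ℝ | ∃ i : Fin m, x = ∑ j : Fin k, max (B i j) 0}) :
    0 ≤ c ∧ ∀ i, (∑ j : Fin k, max (B i j) 0) ≤ c := by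
  set g : Fin m → ℝ := fun i => ∑ j : Fin k, max (B i j) 0 with hg
  have hset : {x : ℝ | ∃ i : Fin m, x = g i} = Set.range g := by
    ext x; simp [eq_comm, Set.range]
  have hbdd : BddAbove {x : ℝ | ∃ i : Fin m, x = g i} := by
    rw [hset]; exact (Set.finite_range g).bddAbove
  have hle : ∀ i, g i ≤ c := by
    intro i
    rw [hc]
    exact le_csSup hbdd ⟨i, rfl⟩
  have hg0 : 0 ≤ g ⟨0, hm⟩ := Finset.sum_nonneg fun j _ => le_max_right _ 0
  exact ⟨le_trans hg0 (hle _), hle⟩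

lemma onehat_knap {m k : ℕ} (A : Matrix (Fin m) (Fin (m + k)) ℤ)
    (A1 : Matrix (Fin m) (Fin m) ℤ) (hA1 : A1 = Matrix.of fun i j => A i (Fin.castAdd k j))
    (A2 : Matrix (Fin m) (Fin k) ℤ) (hA2 : A2 = Matrix.of fun i j => A i (Fin.natAdd m j))
    (vbar : Fin m → ℤ) (hvbar : vbar = fun i => ∑ j : Fin m, A1 i j)
    (onehat : Fin (m + k) → ℝ)
    (honehat : onehat = fun j : Fin (m + k) => if (j : ℕ) < m then (1 : ℝ) else 0) :
    (Rmat A).mulVec onehat = Rvec vbar := by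
  rw [mulVec_splitR A A1 hA1 A2 hA2]
  have hl : (fun i => onehat (Fin.castAdd k i)) = fun _ => (1:ℝ) := by
    funext i; simp [honehat, Fin.is_lt]
  have hr : (fun j => onehat (Fin.natAdd m j)) = fun _ => (0:ℝ) := by
    funext j; simp [honehat]
  rw [hl, hr]
  funext i
  simp [Rmat, Rvec, Matrix.mulVec, dotProduct, hvbar]

lemma lemA {m k : ℕ} (hm : 1 ≤ m) (s : ℕ) (hs : 1 ≤ s)
    (A : Matrix (Fin m) (Fin (m + k)) ℤ)
    (A1 : Matrix (Fin m) (Fin m) ℤ) (hA1 : A1 = Matrix.of fun i j => A i (Fin.castAdd k j))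
    (A2 : Matrix (Fin m) (Fin k) ℤ) (hA2 : A2 = Matrix.of fun i j => A i (Fin.natAdd m j))
    (hdet : A1.det ≠ 0)
    (c : ℝ) (hc : c = sSup {x : ℝ | ∃ i : Fin m,
      x = ∑ j : Fin k,
        max (((A1.map (Int.cast : ℤ → ℝ))⁻¹ * A2.map (Int.cast : ℤ → ℝ)) i j) 0})
    (vbar : Fin m → ℤ) (hvbar : vbar = fun i => ∑ j : Fin m, A1 i j)
    (onehat : Fin (m + k) → ℝ)
    (honehat : onehat = fun j : Fin (m + k) => if (j : ℕ) < m then (1 : ℝ) else 0)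
    {t : ℝ} (ht0 : 0 ≤ t)
    (hfeas : ∀ b : Fin m → ℤ,
      Rvec b ∈ interior ((fun cc => t • (Rvec vbar) + cc) '' coneOf A) → b ∈ feas s A) :
    ∀ x ∈ Submodule.span ℝ (kerLat A),
      ∃ T : Finset (Fin (m + k) → ℝ), ↑T ⊆ kerLat A ∧ s ≤ T.card ∧
        ∀ y ∈ T, ∃ kk ∈ ((fun x => x - onehat) '' knap A (Rvec vbar)),
          x = y + (t + 1 + c) • kk := by
  classical
  set B : Matrix (Fin m) (Fin k) ℝ := (Rmat A1)⁻¹ * (Rmat A2) with hB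
  obtain ⟨hc0, hcrow⟩ := csum_facts hm B c hc
  set μ : ℝ := t + 1 + c with hμdef
  have hμ : 0 < μ := by rw [hμdef]; linarith
  have hdetR : (Rmat A1).det ≠ 0 := by
    have hcd : (Rmat A1).det = ((A1.det : ℝ)) := by
      simpa [Rmat, RingHom.mapMatrix_apply] using (RingHom.map_det (Int.castRingHom ℝ) A1).symm
    rw [hcd]; exact_mod_cast hdet
  have hunit : IsUnit (Rmat A1).det := isUnit_iff_ne_zero.mpr hdetR
  have hA1B : (Rmat A1) * B = Rmat A2 := by
    rw [hB, ← Matrix.mul_assoc, Matrix.mul_nonsing_inv _ hunit, Matrix.one_mul]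
  intro x hx
  have hxker : (Rmat A).mulVec x = 0 := span_ker_subset A x hx
  set x1 : Fin m → ℝ := fun i => x (Fin.castAdd k i) with hx1
  set x2 : Fin k → ℝ := fun j => x (Fin.natAdd m j) with hx2
  set z : Fin k → ℤ := fun j => ⌊x2 j⌋ with hz
  set δ : Fin k → ℝ := fun j => x2 j - (z j : ℝ) with hδ
  have hδ0 : ∀ j, 0 ≤ δ j := fun j => by simp [hδ, hz, Int.floor_le]
  have hδ1 : ∀ j, δ j < 1 := fun j => by
    simp only [hδ, hz]
    have := Int.lt_floor_add_one (x2 j)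
    linarith
  set e : Fin m → ℝ := B.mulVec δ with he
  have hec : ∀ i, e i ≤ c := by
    intro i
    refine le_trans ?_ (hcrow i)
    rw [he]
    simp only [Matrix.mulVec, dotProduct]
    refine Finset.sum_le_sum fun j _ => ?_
    rcases le_or_gt 0 (B i j) with h | h
    · calc B i j * δ j ≤ B i j * 1 := by nlinarith [hδ1 j]
        _ ≤ max (B i j) 0 := by simp [le_max_iff]
    · calc B i j * δ j ≤ 0 := mul_nonpos_of_nonpos_of_nonneg (le_of_lt h) (hδ0 j)
        _ ≤ max (B i j) 0 := le_max_right _ 0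
  set q : Fin m → ℤ := fun i => ⌊x1 i + e i + t⌋ + 1 with hq
  have key1 : ∀ i, x1 i + e i + t < (q i : ℝ) := by
    intro i
    rw [hq]
    push_cast
    exact Int.lt_floor_add_one _
  have key2 : ∀ i, (q i : ℝ) ≤ x1 i + μ := by
    intro i
    rw [hq, hμdef]
    push_cast
    have := Int.floor_le (x1 i + e i + t)
    have := hec i
    linarith
  set wvec : Fin (m + k) → ℤ := fun p => Fin.addCases (fun i => q i) (fun j => z j) p with hwvec
  set bv : Fin m → ℤ := A.mulVec wvec with hbv
  have hwl : (fun i => wvec (Fin.castAdd k i)) = q := by funext i; simp [hwvec]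
  have hwr : (fun j => wvec (Fin.natAdd m j)) = z := by funext j; simp [hwvec]
  have hbvR : Rvec bv = (Rmat A1).mulVec (Rvec q) + (Rmat A2).mulVec (Rvec z) := by
    rw [hbv, mulVec_splitZ A A1 hA1 A2 hA2, hwl, hwr]
    rw [rmat_mulVec_cast' A1 q, rmat_mulVec_cast' A2 z]
    funext i
    simp [Rvec]
  set g : Fin m → ℝ := fun i => (q i : ℝ) - x1 i - e i - t with hgdef
  have hgpos : ∀ i, 0 < g i := fun i => by simp only [hgdef]; linarith [key1 i]
  have hA1x1 : (Rmat A1).mulVec x1 = -(Rmat A2).mulVec x2 := by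
    have hsplit := mulVec_splitR A A1 hA1 A2 hA2 x
    rw [hxker] at hsplit
    have h := hsplit.symm
    rw [add_eq_zero_iff_eq_neg] at h
    exact h
  have hA1one : (Rmat A1).mulVec (fun _ => (1:ℝ)) = Rvec vbar := by
    funext i
    simp [Rmat, Rvec, Matrix.mulVec, dotProduct, hvbar]
  have hA1g : (Rmat A1).mulVec g = Rvec bv - t • Rvec vbar := by
    have hgsub : g = Rvec q - x1 - e - t • (fun _ => (1:ℝ)) := by
      funext i
      simp only [hgdef, Rvec, Pi.sub_apply, Pi.smul_apply, smul_eq_mul]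
      ring
    rw [hgsub, Matrix.mulVec_sub, Matrix.mulVec_sub, Matrix.mulVec_sub, Matrix.mulVec_smul]
    have hAe : (Rmat A1).mulVec e = (Rmat A2).mulVec x2 - (Rmat A2).mulVec (Rvec z) := by
      rw [he, Matrix.mulVec_mulVec, hA1B]
      have : δ = x2 - Rvec z := by funext j; simp [hδ, Rvec]
      rw [this, Matrix.mulVec_sub]
    rw [hAe, hA1x1, hA1one, hbvR]
    abel
  have hmem : Rvec bv ∈ interior ((fun cc => t • (Rvec vbar) + cc) '' coneOf A) := by
    rw [mem_interior_translate]
    rw [← hA1g]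
    exact pos_mem_interior A A1 hA1 hdet g hgpos
  have hbfeas := hfeas bv hmem
  -- extract s distinct solutions
  obtain ⟨Ss, hSsub, hScard⟩ := Set.exists_subset_card_eq hbfeas
  have hSfin : Ss.Finite := by
    by_contra hinf
    rw [Set.Infinite.ncard hinf] at hScard
    omega
  set U : Finset (Fin (m + k) → ℤ) := hSfin.toFinset with hU
  have hUcard : U.card = s := by
    rw [hU, ← Set.ncard_eq_toFinset_card _ hSfin]
    exact hScard
  have hUsol : ∀ u ∈ U, (∀ i, 0 ≤ u i) ∧ A.mulVec u = bv := by
    intro u hu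
    rw [hU, Set.Finite.mem_toFinset] at hu
    exact hSsub hu
  set T : Finset (Fin (m + k) → ℝ) := U.image (fun u => Rvec (wvec - u)) with hT
  have hinj : Set.InjOn (fun u => Rvec (wvec - u)) ↑U := by
    intro u1 h1 u2 h2 hequ
    funext j
    have h3 := congrFun hequ j
    simp only [Rvec, Pi.sub_apply] at h3
    push_cast at h3
    have h4 : ((u1 j : ℤ) : ℝ) = ((u2 j : ℤ) : ℝ) := by linarith
    exact_mod_cast h4
  refine ⟨T, ?_, ?_, ?_⟩
  · rintro y hy
    rw [hT] at hy
    simp only [Finset.coe_image, Set.mem_image, Finset.mem_coe] at hy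
    obtain ⟨u, hu, rfl⟩ := hy
    exact ⟨wvec - u, by rw [Matrix.mulVec_sub, (hUsol u hu).2, hbv, sub_self], rfl⟩
  · rw [hT, Finset.card_image_of_injOn hinj, hUcard]
  · intro y hy
    rw [hT, Finset.mem_image] at hy
    obtain ⟨u, hu, rfl⟩ := hy
    obtain ⟨hu0, huA⟩ := hUsol u hu
    set p : Fin (m + k) → ℝ := μ⁻¹ • (x - Rvec (wvec - u)) + onehat with hp
    have hyker : (Rmat A).mulVec (Rvec (wvec - u)) = 0 := by
      rw [rmat_mulVec_cast', Matrix.mulVec_sub, huA, hbv, sub_self]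
      funext i; simp [Rvec]
    refine ⟨μ⁻¹ • (x - Rvec (wvec - u)), ⟨p, ⟨?_, ?_⟩, by show p - onehat = _; rw [hp, add_sub_cancel_right]⟩, ?_⟩
    · -- nonnegativity of p
      intro jj
      cases jj using Fin.addCases with
      | left i =>
        have hyc : Rvec (wvec - u) (Fin.castAdd k i) = (q i : ℝ) - (u (Fin.castAdd k i) : ℝ) := by
          simp [Rvec, hwvec]
        have hohc : onehat (Fin.castAdd k i) = 1 := by simp [honehat, Fin.is_lt]
        rw [hp]
        simp only [Pi.add_apply, Pi.smul_apply, Pi.sub_apply, smul_eq_mul, hyc, hohc]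
        have hui : (0:ℝ) ≤ (u (Fin.castAdd k i) : ℝ) := by exact_mod_cast hu0 _
        have hq2 := key2 i
        have hxi : x (Fin.castAdd k i) = x1 i := rfl
        rw [hxi]
        have hw : -μ ≤ x1 i - ((q i:ℝ) - (u (Fin.castAdd k i):ℝ)) := by linarith
        nlinarith [mul_nonneg (inv_nonneg.mpr hμ.le)
          (by linarith : (0:ℝ) ≤ x1 i - ((q i:ℝ) - (u (Fin.castAdd k i):ℝ)) + μ),
          mul_inv_cancel₀ (ne_of_gt hμ)]
      | right j =>
        have hyc : Rvec (wvec - u) (Fin.natAdd m j) = (z j : ℝ) - (u (Fin.natAdd m j) : ℝ) := by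
          simp [Rvec, hwvec]
        have hohc : onehat (Fin.natAdd m j) = 0 := by simp [honehat]
        rw [hp]
        simp only [Pi.add_apply, Pi.smul_apply, Pi.sub_apply, smul_eq_mul, hyc, hohc]
        have hui : (0:ℝ) ≤ (u (Fin.natAdd m j) : ℝ) := by exact_mod_cast hu0 _
        have hfl : (z j : ℝ) ≤ x2 j := Int.floor_le _
        have hxj : x (Fin.natAdd m j) = x2 j := rfl
        rw [hxj, add_zero]
        exact mul_nonneg (inv_nonneg.mpr hμ.le) (by linarith)
    · -- A p = vbar
      rw [hp, Matrix.mulVec_add, Matrix.mulVec_smul, Matrix.mulVec_sub, hxker, hyker,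
        onehat_knap A A1 hA1 A2 hA2 vbar hvbar onehat honehat]
      simp
    · rw [smul_smul, mul_inv_cancel₀ (ne_of_gt hμ), one_smul]
      abel


lemma lemB {m k : ℕ} (s : ℕ) (hs : 1 ≤ s)
    (A : Matrix (Fin m) (Fin (m + k)) ℤ)
    (hgcd : Finset.univ.gcd (fun I : Fin m ↪ Fin (m + k) => (A.submatrix id ⇑I).det) = 1)
    (hreg : ∀ x : Fin (m + k) → ℝ, (∀ i, 0 ≤ x i) → (Rmat A).mulVec x = 0 → x = 0)
    (A1 : Matrix (Fin m) (Fin m) ℤ) (hA1 : A1 = Matrix.of fun i j => A i (Fin.castAdd k j))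
    (A2 : Matrix (Fin m) (Fin k) ℤ) (hA2 : A2 = Matrix.of fun i j => A i (Fin.natAdd m j))
    (hdet : A1.det ≠ 0)
    (vbar : Fin m → ℤ) (hvbar : vbar = fun i => ∑ j : Fin m, A1 i j)
    (onehat : Fin (m + k) → ℝ)
    (honehat : onehat = fun j : Fin (m + k) => if (j : ℕ) < m then (1 : ℝ) else 0)
    {μ0 : ℝ} (hμ0 : 0 < μ0)
    (hcov : ∀ x ∈ Submodule.span ℝ (kerLat A),
      ∃ T : Finset (Fin (m + k) → ℝ), ↑T ⊆ kerLat A ∧ s ≤ T.card ∧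
        ∀ y ∈ T, ∃ kk ∈ ((fun x => x - onehat) '' knap A (Rvec vbar)), x = y + μ0 • kk) :
    ∀ b : Fin m → ℤ,
      Rvec b ∈ interior ((fun cc => μ0 • (Rvec vbar) + cc) '' coneOf A) → b ∈ feas s A := by
  classical
  intro b hb
  rw [mem_interior_translate] at hb
  obtain ⟨xw, hxw0, hxwA⟩ := interior_subset hb
  obtain ⟨u0, hu0A⟩ := int_surj A hgcd b
  set x : Fin (m + k) → ℝ := Rvec u0 - xw - μ0 • onehat with hxdef
  have hAoh : (Rmat A).mulVec onehat = Rvec vbar :=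
    onehat_knap A A1 hA1 A2 hA2 vbar hvbar onehat honehat
  have hxker : (Rmat A).mulVec x = 0 := by
    rw [hxdef, Matrix.mulVec_sub, Matrix.mulVec_sub, Matrix.mulVec_smul,
      rmat_mulVec_cast', hu0A, hxwA, hAoh]
    abel
  have hxspan : x ∈ Submodule.span ℝ (kerLat A) :=
    ker_subset_span A A1 hA1 A2 hA2 hdet x hxker
  obtain ⟨T, hTsub, hTcard, hTcov⟩ := hcov x hxspan
  set φ : (Fin (m + k) → ℝ) → (Fin (m + k) → ℤ) := fun y => fun j => u0 j - ⌊y j⌋ with hφ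
  have hφval : ∀ y ∈ T, ∀ zy : Fin (m + k) → ℤ, y = Rvec zy → φ y = u0 - zy := by
    intro y _ zy hyz
    funext j
    simp [hφ, hyz, Rvec]
  set U : Finset (Fin (m + k) → ℤ) := T.image φ with hU
  have hinj : Set.InjOn φ ↑T := by
    intro y1 h1 y2 h2 heq
    obtain ⟨z1, hz1, rfl⟩ := hTsub h1
    obtain ⟨z2, hz2, rfl⟩ := hTsub h2
    have h3 : u0 - z1 = u0 - z2 := by
      rw [← hφval _ h1 z1 rfl, ← hφval _ h2 z2 rfl, heq]
    have h4 : z1 = z2 := by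
      funext j
      have := congrFun h3 j
      simp only [Pi.sub_apply] at this
      omega
    rw [h4]
  have hUcard : U.card = T.card := by
    rw [hU]
    exact Finset.card_image_of_injOn hinj
  have hUsol : ↑U ⊆ {u : Fin (m + k) → ℤ | (∀ i, 0 ≤ u i) ∧ A.mulVec u = b} := by
    intro u hu
    rw [hU, Finset.coe_image] at hu
    obtain ⟨y, hy, rfl⟩ := hu
    rw [Finset.mem_coe] at hy
    obtain ⟨zy, hzyA, hyz⟩ := hTsub hy
    rw [hφval y hy zy hyz]
    obtain ⟨kk, ⟨p, ⟨hp0, hpA⟩, hkk⟩, hxy⟩ := hTcov y hy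
    constructor
    · intro j
      have hcoord : ((u0 j - zy j : ℤ) : ℝ) = xw j + μ0 * p j := by
        have h1 := congrFun hxy j
        have h2 : kk j = p j - onehat j := by rw [← hkk]; rfl
        have h3 : x j = (u0 j : ℝ) - xw j - μ0 * onehat j := by
          simp [hxdef, Rvec]
        have h4 : y j = (zy j : ℝ) := by rw [hyz]; rfl
        simp only [Pi.add_apply, Pi.smul_apply, smul_eq_mul] at h1
        rw [h3, h4, h2, mul_sub] at h1
        push_cast
        linarith
      have : (0:ℝ) ≤ ((u0 j - zy j : ℤ) : ℝ) := by
        rw [hcoord]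
        have := hxw0 j
        have := hp0 j
        nlinarith
      exact_mod_cast this
    · rw [Matrix.mulVec_sub, hu0A, hzyA, sub_zero]
  have hfin : ({u : Fin (m + k) → ℤ | (∀ i, 0 ≤ u i) ∧ A.mulVec u = b}).Finite :=
    sol_finite A hreg b
  show s ≤ Set.ncard {u : Fin (m + k) → ℤ | (∀ i, 0 ≤ u i) ∧ A.mulVec u = b}
  calc s ≤ T.card := hTcard
    _ = U.card := hUcard.symm
    _ = Set.ncard (↑U : Set (Fin (m + k) → ℤ)) := (Set.ncard_coe_finset U).symm
    _ ≤ _ := Set.ncard_le_ncard hUsol hfin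

/-- Lower bound on ⌈g_s(A, v̄)⌉ via the s-covering radius (Lemma 2).
Here n = m + k, A = (A₁, A₂) with A₁ the first m columns. -/
theorem stmt_7 {m k : ℕ} (hm : 1 ≤ m) (hk : 1 ≤ k) (s : ℕ) (hs : 1 ≤ s)
    (A : Matrix (Fin m) (Fin (m + k)) ℤ) (hA : regular A)
    (A1 : Matrix (Fin m) (Fin m) ℤ) (hA1 : A1 = Matrix.of fun i j => A i (Fin.castAdd k j))
    (A2 : Matrix (Fin m) (Fin k) ℤ) (hA2 : A2 = Matrix.of fun i j => A i (Fin.natAdd m j))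
    (hdet : A1.det ≠ 0)
    (c : ℝ) (hc : c = sSup {x : ℝ | ∃ i : Fin m,
      x = ∑ j : Fin k,
        max (((A1.map (Int.cast : ℤ → ℝ))⁻¹ * A2.map (Int.cast : ℤ → ℝ)) i j) 0})
    (vbar : Fin m → ℤ) (hvbar : vbar = fun i => ∑ j : Fin m, A1 i j)
    (onehat : Fin (m + k) → ℝ) (honehat : onehat = fun j : Fin (m + k) => if (j : ℕ) < m then (1 : ℝ) else 0) :
    (⌈gDiag s A (Rvec vbar)⌉ : ℝ) ≥
      muCov s ((fun x => x - onehat) '' knap A (Rvec vbar)) (kerLat A) - 1 - c := by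
  classical
  obtain ⟨hgcd, hreg⟩ := hA
  have hc0 : 0 ≤ c := (csum_facts hm ((Rmat A1)⁻¹ * (Rmat A2)) c hc).1
  set K : Set (Fin (m + k) → ℝ) := (fun x => x - onehat) '' knap A (Rvec vbar) with hK
  set SS : Set ℝ := {μ : ℝ | 0 < μ ∧ ∀ x ∈ Submodule.span ℝ (kerLat A),
    ∃ T : Finset (Fin (m + k) → ℝ), ↑T ⊆ kerLat A ∧ s ≤ T.card ∧
      ∀ y ∈ T, ∃ kk ∈ K, x = y + μ • kk} with hSS
  set TT : Set ℝ := {t : ℝ | 0 ≤ t ∧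
    ∀ b : Fin m → ℤ, Rvec b ∈ interior ((fun cc => t • (Rvec vbar) + cc) '' coneOf A)
      → b ∈ feas s A} with hTT
  have hmu : muCov s K (kerLat A) = sInf SS := rfl
  have hgd : gDiag s A (Rvec vbar) = sInf TT := rfl
  have hgd0 : 0 ≤ gDiag s A (Rvec vbar) := by
    rw [hgd]
    exact Real.sInf_nonneg fun t ht => ht.1
  have hceil : gDiag s A (Rvec vbar) ≤ (⌈gDiag s A (Rvec vbar)⌉ : ℝ) := Int.le_ceil _
  have hceil0 : (0:ℝ) ≤ (⌈gDiag s A (Rvec vbar)⌉ : ℝ) := by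
    exact_mod_cast Int.ceil_nonneg hgd0
  by_cases hS : SS.Nonempty
  · obtain ⟨μ0, hμ0⟩ := hS
    have hT0 : μ0 ∈ TT := by
      refine ⟨le_of_lt hμ0.1, ?_⟩
      exact lemB s hs A hgcd hreg A1 hA1 A2 hA2 hdet vbar hvbar onehat honehat hμ0.1 hμ0.2
    have hTne : TT.Nonempty := ⟨μ0, hT0⟩
    have hSbdd : BddBelow SS := ⟨0, fun μ hμ => le_of_lt hμ.1⟩
    have hub : ∀ t ∈ TT, muCov s K (kerLat A) ≤ t + 1 + c := by
      intro t ht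
      rw [hmu]
      refine csInf_le hSbdd ?_
      refine ⟨by linarith [ht.1], ?_⟩
      exact lemA hm s hs A A1 hA1 A2 hA2 hdet c hc vbar hvbar onehat honehat ht.1 ht.2
    have h1 : muCov s K (kerLat A) - 1 - c ≤ gDiag s A (Rvec vbar) := by
      rw [hgd]
      refine le_csInf hTne fun t ht => ?_
      linarith [hub t ht]
    linarith
  · have hemp : SS = ∅ := Set.not_nonempty_iff_eq_empty.mp hS
    rw [hmu, hemp, Real.sInf_empty]
    linarith

end
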